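/- Let W : ℤ → K be a nondegenerate elliptic divisibility sequence over a field K (so W(1) = 1 and W(2), W(3) ≠ 0), and suppose W(m) = 0 for some m ≥ 4, with W(m+1), W(m+2) ≠ 0 and W(n) ≠ 0 for 0 < n < m. Define a = W(m+2)/(W(m+1)W(2)) and b = W(m+1)²W(2)/W(m+2). Then for all integers l and v, W(lm + v) = W(v)·a^{vl}·b^{l²}. -/

import Mathlib

/-- Auxiliary predicate: the Ward formula holds at period `l` for all residues. -/
def EDSF (K : Type*) [Field K] (W : ℤ → K) (m : ℤ) (a b : K) (l : ℤ) : Prop :=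
  ∀ r : ℤ, 1 ≤ r → r ≤ m - 1 → W (l * m + r) = W r * a ^ (r * l) * b ^ (l ^ 2)

theorem EDSF_congr {K : Type*} [Field K] {W : ℤ → K} {m : ℤ} {a b : K} {l l' : ℤ}
    (h : l = l') (hF : EDSF K W m a b l) : EDSF K W m a b l' := h ▸ hF

theorem eds_pow_aux {K : Type*} [Field K] {a b : K} (ha : a ≠ 0) (hb : b ≠ 0) (c : K)
    (x1 y1 x2 y2 x3 y3 : ℤ) (hx : x1 + x2 = x3 + x3) (hy : y1 + y2 = 2 + (y3 + y3)) :
    b ^ 2 * (c * a ^ x3 * b ^ y3) ^ 2 = c * a ^ x1 * b ^ y1 * (c * a ^ x2 * b ^ y2) := by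
  have h1 : a ^ x1 * a ^ x2 = a ^ x3 * a ^ x3 := by rw [← zpow_add₀ ha, ← zpow_add₀ ha, hx]
  have h2 : b ^ y1 * b ^ y2 = b ^ (2:ℤ) * (b ^ y3 * b ^ y3) := by
    rw [← zpow_add₀ hb, ← zpow_add₀ hb, ← zpow_add₀ hb, hy]
  have h3 : b ^ (2:ℤ) = b ^ 2 := by norm_cast
  calc b ^ 2 * (c * a ^ x3 * b ^ y3) ^ 2
      = (c * c) * (a ^ x3 * a ^ x3) * (b ^ (2:ℤ) * (b ^ y3 * b ^ y3)) := by rw [h3]; ring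
    _ = (c * c) * (a ^ x1 * a ^ x2) * (b ^ y1 * b ^ y2) := by rw [h1, h2]
    _ = c * a ^ x1 * b ^ y1 * (c * a ^ x2 * b ^ y2) := by ring

/-- Ward's symmetry theorem for elliptic divisibility sequences. -/
theorem eds_ward_symmetry (K : Type*) [Field K] (W : ℤ → K) (m : ℤ)
    (hrec : ∀ n m' : ℤ, W (n + m') * W (n - m') =
      W (n + 1) * W (n - 1) * W m' ^ 2 - W (m' + 1) * W (m' - 1) * W n ^ 2)
    (h0 : W 0 = 0) (h1 : W 1 = 1) (hodd : ∀ n : ℤ, W (-n) = -W n)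
    (h2 : W 2 ≠ 0) (h3 : W 3 ≠ 0)
    (hm4 : 4 ≤ m) (hm : W m = 0)
    (hm1 : W (m + 1) ≠ 0) (hm2 : W (m + 2) ≠ 0)
    (hnz : ∀ n : ℤ, 0 < n → n < m → W n ≠ 0)
    (a b : K)
    (ha : a = W (m + 2) / (W (m + 1) * W 2))
    (hb : b = W (m + 1) ^ 2 * W 2 / W (m + 2)) :
    ∀ l v : ℤ, W (l * m + v) = W v * a ^ (v * l) * b ^ (l ^ 2) := by
  have ha0 : a ≠ 0 := by rw [ha]; exact div_ne_zero hm2 (mul_ne_zero hm1 h2)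
  have hb0 : b ≠ 0 := by
    rw [hb]; exact div_ne_zero (mul_ne_zero (pow_ne_zero 2 hm1) h2) hm2
  have hab1 : W (m + 1) = a * b := by rw [ha, hb]; field_simp
  have hab2 : W (m + 2) = W 2 * a ^ 2 * b := by rw [ha, hb]; field_simp
  have hbW : b * W (m + 2) = W (m + 1) ^ 2 * W 2 := by rw [hb]; field_simp
  -- value of W (m+3)
  have e := hrec (m + 2) 2
  rw [show m + 2 - 2 = m from by ring, show m + 2 + 2 = m + 4 from by ring,
      show m + 2 + 1 = m + 3 from by ring, show m + 2 - 1 = m + 1 from by ring,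
      show (2:ℤ) + 1 = 3 from by ring, show (2:ℤ) - 1 = 1 from by ring, hm, h1] at e
  have hm3val : W (m + 3) * (W (m + 1) * W 2 ^ 2) = W 3 * W (m + 2) ^ 2 := by
    linear_combination -e
  have hm3ne : W (m + 3) ≠ 0 := by
    intro h
    rw [h, zero_mul] at hm3val
    exact (mul_ne_zero h3 (pow_ne_zero 2 hm2)) hm3val.symm
  have hab3 : W (m + 3) = W 3 * a ^ 3 * b := by
    have h' : W (m + 3) = W 3 * W (m + 2) ^ 2 / (W (m + 1) * W 2 ^ 2) := by
      rw [eq_div_iff (mul_ne_zero hm1 (pow_ne_zero 2 h2))]; exact hm3val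
    rw [h', ha, hb]; field_simp
  -- value of W (m-1)
  have e2 := hrec (m + 1) 2
  rw [show m + 1 + 2 = m + 3 from by ring, show m + 1 - 2 = m - 1 from by ring,
      show m + 1 + 1 = m + 2 from by ring, show m + 1 - 1 = m from by ring,
      show (2:ℤ) + 1 = 3 from by ring, show (2:ℤ) - 1 = 1 from by ring, hm, h1] at e2
  have hkey : W (m + 1) * W (m - 1) = -b ^ 2 := by
    have hne : W (m + 3) * W (m + 2) ^ 2 ≠ 0 := mul_ne_zero hm3ne (pow_ne_zero _ hm2)
    apply mul_right_cancel₀ hne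
    linear_combination (W (m + 1) * W (m + 2) ^ 2) * e2 +
      (W (m + 3) * (b * W (m + 2) + W (m + 1) ^ 2 * W 2)) * hbW +
      (W (m + 1) ^ 3) * hm3val
  have key : ∀ n : ℤ, W (n + m) * W (n - m) = b ^ 2 * W n ^ 2 := by
    intro n
    have e := hrec n m
    rw [hm] at e
    linear_combination e - W n ^ 2 * hkey
  -- single-period formula, natural exponents
  have base1 : ∀ k : ℕ, (k : ℤ) ≤ m - 1 → W (m + (k : ℤ)) = W (k : ℤ) * a ^ k * b := by
    intro k
    induction k using Nat.strong_induction_on with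
    | _ k IH =>
      intro hk
      rcases lt_or_ge k 4 with hk4 | hk4
      · interval_cases k
        · norm_num [hm, h0]
        · norm_num [h1, hab1]
        · norm_num [hab2]
        · norm_num [hab3]
      · obtain ⟨n, rfl⟩ : ∃ n, k = n + 4 := ⟨k - 4, by omega⟩
        have hk' : ((n : ℤ) + 4) ≤ m - 1 := by push_cast at hk; linarith
        have IH1 := IH (n + 3) (by omega) (by push_cast; omega)
        have IH2 := IH (n + 2) (by omega) (by push_cast; omega)
        push_cast at IH1 IH2 ⊢
        have e := hrec (m + ((n : ℤ) + 3)) ((n : ℤ) + 3)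
        rw [show m + ((n:ℤ)+3) - ((n:ℤ)+3) = m from by ring,
            show m + ((n:ℤ)+3) + 1 = m + ((n:ℤ)+4) from by ring,
            show m + ((n:ℤ)+3) - 1 = m + ((n:ℤ)+2) from by ring,
            show (n:ℤ)+3+1 = (n:ℤ)+4 from by ring,
            show (n:ℤ)+3-1 = (n:ℤ)+2 from by ring,
            hm, IH1, IH2] at e
        have h3z : W ((n:ℤ)+3) ≠ 0 := hnz _ (by omega) (by omega)
        have h2z : W ((n:ℤ)+2) ≠ 0 := hnz _ (by omega) (by omega)
        have hD : W ((n:ℤ)+2) * a ^ (n+2) * b * W ((n:ℤ)+3) ^ 2 ≠ 0 :=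
          mul_ne_zero (mul_ne_zero (mul_ne_zero h2z (pow_ne_zero _ ha0)) hb0)
            (pow_ne_zero _ h3z)
        apply mul_right_cancel₀ hD
        linear_combination -e
  have P1 : ∀ r : ℤ, 0 ≤ r → r ≤ m - 1 → W (m + r) = W r * a ^ r * b := by
    intro r hr0 hr
    obtain ⟨k, rfl⟩ := Int.eq_ofNat_of_zero_le hr0
    rw [zpow_natCast]
    exact base1 k hr
  -- a^m = b^2
  have hWneg1 : W (-1) = -1 := by have := hodd 1; rwa [h1] at this
  have hWm1ne : W (m - 1) ≠ 0 := hnz _ (by omega) (by omega)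
  have eK := key (m - 1)
  rw [show m - 1 + m = m + (m - 1) from by ring, show m - 1 - m = (-1 : ℤ) from by ring,
      hWneg1, P1 (m - 1) (by omega) (le_refl _)] at eK
  have e2' : a ^ (m - 1) * b = -(b ^ 2 * W (m - 1)) :=
    mul_left_cancel₀ hWm1ne (by linear_combination -eK)
  have hmm1 : W (m - 1) * a = -b := by
    apply mul_left_cancel₀ hb0
    linear_combination hkey - W (m - 1) * hab1
  have habm2 : a ^ m = b ^ 2 := by
    apply mul_right_cancel₀ hb0
    have hsplit : a ^ m = a ^ (m - 1) * a := by
      rw [← zpow_add_one₀ ha0]; congr 1; ring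
    rw [hsplit]
    linear_combination a * e2' - b ^ 2 * hmm1
  have habmz : a ^ m = b ^ (2 : ℤ) := by rw [habm2]; norm_cast
  -- two-sided induction steps
  have F0 : EDSF K W m a b 0 := by
    intro r hr1 hr2
    rw [show (0:ℤ) * m + r = r from by ring, show r * (0:ℤ) = 0 from by ring,
        show ((0:ℤ)) ^ 2 = 0 from by ring, zpow_zero, zpow_zero, mul_one, mul_one]
  have F1 : EDSF K W m a b 1 := by
    intro r hr1 hr2
    rw [show (1:ℤ) * m + r = m + r from by ring, show r * (1:ℤ) = r from by ring,
        show ((1:ℤ)) ^ 2 = 1 from by ring, zpow_one]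
    exact P1 r (by omega) hr2
  have stepUp : ∀ l : ℤ, EDSF K W m a b l → EDSF K W m a b (l + 1) →
      EDSF K W m a b (l + 2) := by
    intro l hl0 hl1 r hr1 hr2
    have hWr : W r ≠ 0 := hnz r (by omega) (by omega)
    have e := key ((l + 1) * m + r)
    rw [show (l+1)*m + r + m = (l+2)*m + r from by ring,
        show (l+1)*m + r - m = l*m + r from by ring,
        hl0 r hr1 hr2, hl1 r hr1 hr2] at e
    have hD : W r * a ^ (r * l) * b ^ (l ^ 2) ≠ 0 :=
      mul_ne_zero (mul_ne_zero hWr (zpow_ne_zero _ ha0)) (zpow_ne_zero _ hb0)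
    apply mul_right_cancel₀ hD
    rw [e]
    exact eds_pow_aux ha0 hb0 (W r) (r*(l+2)) ((l+2)^2) (r*l) (l^2) (r*(l+1)) ((l+1)^2)
      (by ring) (by ring)
  have stepDown : ∀ l : ℤ, EDSF K W m a b (l + 1) → EDSF K W m a b (l + 2) →
      EDSF K W m a b l := by
    intro l hl1 hl2 r hr1 hr2
    have hWr : W r ≠ 0 := hnz r (by omega) (by omega)
    have e := key ((l + 1) * m + r)
    rw [show (l+1)*m + r + m = (l+2)*m + r from by ring,
        show (l+1)*m + r - m = l*m + r from by ring,
        hl2 r hr1 hr2, hl1 r hr1 hr2] at e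
    have hD : W r * a ^ (r * (l+2)) * b ^ ((l+2) ^ 2) ≠ 0 :=
      mul_ne_zero (mul_ne_zero hWr (zpow_ne_zero _ ha0)) (zpow_ne_zero _ hb0)
    apply mul_left_cancel₀ hD
    rw [e]
    exact eds_pow_aux ha0 hb0 (W r) (r*(l+2)) ((l+2)^2) (r*l) (l^2) (r*(l+1)) ((l+1)^2)
      (by ring) (by ring)
  have pairup : ∀ n : ℕ, EDSF K W m a b (n : ℤ) ∧ EDSF K W m a b ((n : ℤ) + 1) := by
    intro n
    induction n with
    | zero => exact ⟨EDSF_congr (by norm_num) F0, EDSF_congr (by norm_num) F1⟩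
    | succ n ih =>
      exact ⟨EDSF_congr (by push_cast; ring) ih.2,
        EDSF_congr (by push_cast; ring) (stepUp (n : ℤ) ih.1 ih.2)⟩
  have pairdown : ∀ n : ℕ, EDSF K W m a b (-(n : ℤ)) ∧ EDSF K W m a b (-(n : ℤ) + 1) := by
    intro n
    induction n with
    | zero => exact ⟨EDSF_congr (by norm_num) F0, EDSF_congr (by norm_num) F1⟩
    | succ n ih =>
      refine ⟨EDSF_congr (by push_cast; ring)
        (stepDown (-(n : ℤ) - 1) (EDSF_congr (by ring) ih.1) (EDSF_congr (by ring) ih.2)),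
        EDSF_congr (by push_cast; ring) ih.1⟩
  have Hall : ∀ l : ℤ, EDSF K W m a b l := by
    intro l
    rcases le_total 0 l with h | h
    · obtain ⟨n, rfl⟩ := Int.eq_ofNat_of_zero_le h
      exact (pairup n).1
    · obtain ⟨n, hn⟩ := Int.eq_ofNat_of_zero_le (neg_nonneg.2 h)
      exact EDSF_congr (by omega) (pairdown n).1
  -- the zero chain
  have Z : ∀ l : ℤ, W (l * m) = 0 := by
    intro l
    induction l using Int.induction_on with
    | zero => rw [zero_mul, h0]
    | succ n ih =>
      have e := hrec ((n:ℤ)*m + 1) (m - 1)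
      rw [show (n:ℤ)*m + 1 + (m-1) = ((n:ℤ)+1)*m from by ring,
          show (n:ℤ)*m + 1 - (m-1) = ((n:ℤ)-1)*m + 2 from by ring,
          show (n:ℤ)*m + 1 + 1 = (n:ℤ)*m + 2 from by ring,
          show (n:ℤ)*m + 1 - 1 = (n:ℤ)*m from by ring,
          show m - 1 + 1 = m from by ring, hm, ih] at e
      have hne : W (((n:ℤ)-1)*m + 2) ≠ 0 := by
        rw [Hall ((n:ℤ)-1) 2 (by norm_num) (by omega)]
        exact mul_ne_zero (mul_ne_zero h2 (zpow_ne_zero _ ha0)) (zpow_ne_zero _ hb0)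
      have e' : W (((n:ℤ)+1)*m) * W (((n:ℤ)-1)*m + 2) = 0 := by rw [e]; ring
      exact (mul_eq_zero.mp e').resolve_right hne
    | pred n ih =>
      have e := hrec ((-(n:ℤ))*m - 1) (m - 1)
      rw [show (-(n:ℤ))*m - 1 + (m-1) = (-(n:ℤ))*m + (m-2) from by ring,
          show (-(n:ℤ))*m - 1 - (m-1) = (-(n:ℤ)-1)*m from by ring,
          show (-(n:ℤ))*m - 1 + 1 = (-(n:ℤ))*m from by ring,
          show m - 1 + 1 = m from by ring, hm, ih] at e
      have hne : W ((-(n:ℤ))*m + (m-2)) ≠ 0 := by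
        rw [Hall (-(n:ℤ)) (m-2) (by omega) (by omega)]
        exact mul_ne_zero (mul_ne_zero (hnz (m-2) (by omega) (by omega)) (zpow_ne_zero _ ha0))
          (zpow_ne_zero _ hb0)
      have e' : W ((-(n:ℤ))*m + (m-2)) * W ((-(n:ℤ)-1)*m) = 0 := by rw [e]; ring
      exact (mul_eq_zero.mp e').resolve_left hne
  -- final assembly
  intro l v
  obtain ⟨q, r, rfl, hr0, hrm⟩ : ∃ q r : ℤ, v = q * m + r ∧ 0 ≤ r ∧ r < m :=
    ⟨v / m, v % m, by linear_combination (Int.mul_ediv_add_emod v m).symm,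
      Int.emod_nonneg v (by omega), Int.emod_lt_of_pos v (by omega)⟩
  by_cases hr : r = 0
  · subst hr
    rw [show l * m + (q * m + 0) = (l + q) * m from by ring, Z (l + q),
        show q * m + 0 = q * m from by ring, Z q, zero_mul, zero_mul]
  · have hr1 : 1 ≤ r := by omega
    have hrm1 : r ≤ m - 1 := by omega
    have HL := Hall (l + q) r hr1 hrm1
    have HR := Hall q r hr1 hrm1
    rw [show l * m + (q * m + r) = (l + q) * m + r from by ring, HL, HR]
    have ea : a ^ ((q * m + r) * l) = b ^ (2 * (q * l)) * a ^ (r * l) := by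
      rw [show (q * m + r) * l = m * (q * l) + r * l from by ring, zpow_add₀ ha0,
        zpow_mul a m (q * l), habmz, ← zpow_mul]
    rw [ea, show r * (l + q) = r * q + r * l from by ring, zpow_add₀ ha0,
        show (l + q) ^ 2 = q ^ 2 + (2 * (q * l) + l ^ 2) from by ring,
        zpow_add₀ hb0, zpow_add₀ hb0]
    ring
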